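/- Exponentially small parity bias for essentially-structured rectangles: There exists N such that for every n ≥ N the following holds with m = n^256. Let ρ ∈ {0,1,*}^n and let X × Y ⊆ [m]^n × ({0,1}^m)^n be a ρ-essentially-structured rectangle with nm − log₂|Y| ≤ n³ + 1. Then for every nonempty I ⊆ free(ρ), when (x,y) is uniformly distributed on X × Y, |E[(−1)^(Σ_{i∈I} Ind_m(x_i, y_i))]| ≤ n^(−5|I|). -/

import Mathlib

open Finset

noncomputable def chi (b : Bool) : ℝ := if b then -1 else 1

lemma chi_abs (b : Bool) : |chi b| = 1 := by cases b <;> simp [chi]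

lemma chi_mul_xor (b b' : Bool) : chi b * chi (xor b b') = chi b' := by
  cases b <;> cases b' <;> norm_num [chi]

noncomputable def CC {m : ℕ} (u : Fin m → Bool) : ℝ := ∑ a, chi (u a)

lemma CC_abs_le {m : ℕ} (u : Fin m → Bool) : |CC u| ≤ m := by
  calc |CC u| ≤ ∑ a, |chi (u a)| := Finset.abs_sum_le_sum_abs _ _
  _ = m := by simp [chi_abs]

lemma mgf {m : ℕ} (l : ℝ) :
    ∑ u : Fin m → Bool, Real.exp (l * CC u) = (Real.exp l + Real.exp (-l)) ^ m := by
  have h : ∀ u : Fin m → Bool, Real.exp (l * CC u) = ∏ a, Real.exp (l * chi (u a)) := by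
    intro u
    rw [CC, Finset.mul_sum, Real.exp_sum]
  simp_rw [h]
  have := (Finset.prod_univ_sum (fun _ : Fin m => (univ : Finset Bool))
    (fun _ b => Real.exp (l * chi b))).symm
  rw [Fintype.piFinset_univ] at this
  rw [this]
  have hb : ∑ b : Bool, Real.exp (l * chi b) = Real.exp l + Real.exp (-l) := by
    rw [Fintype.sum_bool]
    simp [chi]
    ring
  rw [hb, Finset.prod_const, card_univ, Fintype.card_fin]

lemma tail_eps {m : ℕ} (hm : 0 < m) {s ε : ℝ} (hs : 0 ≤ s) (hε : ε ^ 2 = 1) :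
    (((univ : Finset (Fin m → Bool)).filter fun u => s ≤ ε * CC u).card : ℝ) ≤
      2 ^ m * Real.exp (-(s ^ 2 / (2 * m))) := by
  have hmR : (0:ℝ) < m := by exact_mod_cast hm
  set l : ℝ := s / m with hl_def
  have hl : 0 ≤ l := div_nonneg hs hmR.le
  have key : (((univ : Finset (Fin m → Bool)).filter fun u => s ≤ ε * CC u).card : ℝ) *
      Real.exp (l * s) ≤ (Real.exp (l * ε) + Real.exp (-(l * ε))) ^ m := by
    rw [← mgf (l * ε)]
    calc (((univ : Finset (Fin m → Bool)).filter fun u => s ≤ ε * CC u).card : ℝ) *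
        Real.exp (l * s)
        = ∑ _u ∈ (univ : Finset (Fin m → Bool)).filter fun u => s ≤ ε * CC u,
            Real.exp (l * s) := by rw [Finset.sum_const, nsmul_eq_mul]
      _ ≤ ∑ u ∈ (univ : Finset (Fin m → Bool)).filter fun u => s ≤ ε * CC u,
            Real.exp ((l * ε) * CC u) := by
          apply Finset.sum_le_sum
          intro u hu
          rw [Finset.mem_filter] at hu
          apply Real.exp_le_exp.2
          have : l * s ≤ l * (ε * CC u) := mul_le_mul_of_nonneg_left hu.2 hl
          linarith [this]
      _ ≤ ∑ u : Fin m → Bool, Real.exp ((l * ε) * CC u) := by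
          apply Finset.sum_le_sum_of_subset_of_nonneg (Finset.filter_subset _ _)
          intro u _ _
          positivity
  have cosh_bound : Real.exp (l * ε) + Real.exp (-(l * ε)) ≤ 2 * Real.exp (l ^ 2 / 2) := by
    have h1 : Real.exp (l * ε) + Real.exp (-(l * ε)) = 2 * Real.cosh (l * ε) := by
      rw [Real.cosh_eq]; ring
    rw [h1]
    have h2 := Real.cosh_le_exp_half_sq (l * ε)
    have h3 : (l * ε) ^ 2 = l ^ 2 := by rw [mul_pow, hε, mul_one]
    rw [h3] at h2
    linarith
  have hpow : (Real.exp (l * ε) + Real.exp (-(l * ε))) ^ m ≤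
      (2 * Real.exp (l ^ 2 / 2)) ^ m := by
    apply pow_le_pow_left₀ (by positivity) cosh_bound
  have hfin : ((2 : ℝ) * Real.exp (l ^ 2 / 2)) ^ m * Real.exp (-(l * s)) =
      2 ^ m * Real.exp (-(s ^ 2 / (2 * m))) := by
    rw [mul_pow, ← Real.exp_nat_mul, mul_assoc, ← Real.exp_add]
    congr 2
    rw [hl_def]
    field_simp
    ring
  have hexp_pos : (0:ℝ) < Real.exp (l * s) := Real.exp_pos _
  calc (((univ : Finset (Fin m → Bool)).filter fun u => s ≤ ε * CC u).card : ℝ)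
      = (((univ : Finset (Fin m → Bool)).filter fun u => s ≤ ε * CC u).card : ℝ) *
        Real.exp (l * s) * Real.exp (-(l * s)) := by
        rw [mul_assoc, ← Real.exp_add]; simp
    _ ≤ (2 * Real.exp (l ^ 2 / 2)) ^ m * Real.exp (-(l * s)) := by
        apply mul_le_mul_of_nonneg_right (key.trans hpow) (Real.exp_pos _).le
    _ = 2 ^ m * Real.exp (-(s ^ 2 / (2 * m))) := hfin

lemma tail_abs {m : ℕ} (hm : 0 < m) {s : ℝ} (hs : 0 ≤ s) :
    (((univ : Finset (Fin m → Bool)).filter fun u => s < |CC u|).card : ℝ) ≤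
      2 * (2 ^ m * Real.exp (-(s ^ 2 / (2 * m)))) := by
  have hsub : ((univ : Finset (Fin m → Bool)).filter fun u => s < |CC u|) ⊆
      ((univ : Finset (Fin m → Bool)).filter fun u => s ≤ (1:ℝ) * CC u) ∪
      ((univ : Finset (Fin m → Bool)).filter fun u => s ≤ (-1:ℝ) * CC u) := by
    intro u hu
    rw [Finset.mem_filter] at hu
    rw [Finset.mem_union, Finset.mem_filter, Finset.mem_filter]
    rcases le_or_gt (CC u) 0 with h | h
    · right
      refine ⟨Finset.mem_univ _, ?_⟩
      rw [abs_of_nonpos h] at hu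
      linarith [hu.2]
    · left
      refine ⟨Finset.mem_univ _, ?_⟩
      rw [abs_of_pos h] at hu
      linarith [hu.2]
  have h1 := tail_eps hm hs (ε := (1:ℝ)) (by norm_num)
  have h2 := tail_eps hm hs (ε := (-1:ℝ)) (by norm_num)
  have hcard := Finset.card_le_card hsub
  have hcard2 := Finset.card_union_le
    ((univ : Finset (Fin m → Bool)).filter fun u => s ≤ (1:ℝ) * CC u)
    ((univ : Finset (Fin m → Bool)).filter fun u => s ≤ (-1:ℝ) * CC u)
  have : (((univ : Finset (Fin m → Bool)).filter fun u => s < |CC u|).card : ℝ) ≤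
      (((univ : Finset (Fin m → Bool)).filter fun u => s ≤ (1:ℝ) * CC u).card : ℝ) +
      (((univ : Finset (Fin m → Bool)).filter fun u => s ≤ (-1:ℝ) * CC u).card : ℝ) := by
    exact_mod_cast le_trans hcard hcard2
  linarith

lemma sum_eval {n : ℕ} (m : ℕ) (i : Fin n) (q : (Fin m → Bool) → ℝ) :
    ∑ w : Fin n → Fin m → Bool, q (w i) =
      ((2 ^ m) ^ (n - 1) : ℕ) * ∑ u : Fin m → Bool, q u := by
  rw [← Equiv.sum_comp (Equiv.funSplitAt i (Fin m → Bool)).symm (fun w => q (w i))]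
  have h : ∀ p : (Fin m → Bool) × ({j : Fin n // j ≠ i} → Fin m → Bool),
      ((Equiv.funSplitAt i (Fin m → Bool)).symm p) i = p.1 := by
    intro p
    simp [Equiv.funSplitAt, Equiv.piSplitAt]
  simp_rw [h]
  rw [Fintype.sum_prod_type]
  simp only [Finset.sum_const, card_univ, nsmul_eq_mul]
  have hcard : Fintype.card ({j : Fin n // j ≠ i} → Fin m → Bool) = (2 ^ m) ^ (n - 1) := by
    rw [Fintype.card_fun]
    congr 1
    · rw [Fintype.card_fun, Fintype.card_bool, Fintype.card_fin]
    · rw [Fintype.card_subtype_compl, Fintype.card_subtype_eq, Fintype.card_fin]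
  rw [hcard, ← Finset.mul_sum]

lemma sum_xor {n m : ℕ} {M : Type*} [AddCommMonoid M] (y : Fin n → Fin m → Bool)
    (h : (Fin n → Fin m → Bool) → M) :
    ∑ y' : Fin n → Fin m → Bool, h y' =
      ∑ w : Fin n → Fin m → Bool, h (fun j a => xor (y j a) (w j a)) := by
  have hinv : Function.Involutive
      (fun w : Fin n → Fin m → Bool => fun j a => xor (y j a) (w j a)) := by
    intro w
    funext j a
    simp
  exact (Equiv.sum_comp hinv.toPerm h).symm

lemma bad_count {n m : ℕ} (hm : 0 < m) (i : Fin n) {s : ℝ} (hs : 0 ≤ s) :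
    ∑ p ∈ (univ ×ˢ univ :
        Finset ((Fin n → Fin m → Bool) × (Fin n → Fin m → Bool))),
      (if s < |∑ a, chi (p.1 i a) * chi (p.2 i a)| then (1:ℝ) else 0) ≤
    (((2 ^ m) ^ n : ℕ) : ℝ) ^ 2 * (2 * Real.exp (-(s ^ 2 / (2 * m)))) := by
  have hn : 1 ≤ n := i.pos
  rw [Finset.sum_product]
  have hinner : ∀ y : Fin n → Fin m → Bool,
      ∑ y' : Fin n → Fin m → Bool,
        (if s < |∑ a, chi (y i a) * chi (y' i a)| then (1:ℝ) else 0) =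
      (((2 ^ m) ^ (n - 1) : ℕ) : ℝ) *
        (((univ : Finset (Fin m → Bool)).filter fun u => s < |CC u|).card : ℝ) := by
    intro y
    rw [sum_xor y]
    have hc : ∀ w : Fin n → Fin m → Bool,
        (∑ a, chi (y i a) * chi (xor (y i a) (w i a))) = CC (w i) := by
      intro w
      rw [CC]
      exact Finset.sum_congr rfl fun a _ => chi_mul_xor _ _
    simp_rw [hc]
    rw [sum_eval m i (fun u => if s < |CC u| then (1:ℝ) else 0)]
    congr 1
    rw [Finset.sum_boole]
  simp_rw [hinner]
  rw [Finset.sum_const, card_univ, nsmul_eq_mul]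
  have htail := tail_abs hm hs
  have hcard : (Fintype.card (Fin n → Fin m → Bool) : ℝ) = (((2 ^ m) ^ n : ℕ) : ℝ) := by
    rw [Fintype.card_fun, Fintype.card_fun, Fintype.card_bool, Fintype.card_fin,
      Fintype.card_fin]
  rw [hcard]
  have key : (((2 ^ m) ^ (n - 1) : ℕ) : ℝ) * (2 * (2 ^ m * Real.exp (-(s ^ 2 / (2 * m))))) ≤
      (((2 ^ m) ^ n : ℕ) : ℝ) * (2 * Real.exp (-(s ^ 2 / (2 * m)))) := by
    have hpow : ((2:ℝ) ^ m) ^ (n - 1) * 2 ^ m = ((2:ℝ) ^ m) ^ n := by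
      rw [← pow_succ, Nat.sub_add_cancel hn]
    push_cast
    rw [← hpow]
    ring_nf
    rfl
  calc (((2 ^ m) ^ n : ℕ) : ℝ) *
        ((((2 ^ m) ^ (n - 1) : ℕ) : ℝ) *
          (((univ : Finset (Fin m → Bool)).filter fun u => s < |CC u|).card : ℝ))
      ≤ (((2 ^ m) ^ n : ℕ) : ℝ) *
        ((((2 ^ m) ^ (n - 1) : ℕ) : ℝ) * (2 * (2 ^ m * Real.exp (-(s ^ 2 / (2 * m)))))) := by
        apply mul_le_mul_of_nonneg_left _ (by positivity)
        apply mul_le_mul_of_nonneg_left htail (by positivity)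
    _ ≤ (((2 ^ m) ^ n : ℕ) : ℝ) * ((((2 ^ m) ^ n : ℕ) : ℝ) * (2 * Real.exp (-(s ^ 2 / (2 * m))))) := by
        apply mul_le_mul_of_nonneg_left key (by positivity)
    _ = (((2 ^ m) ^ n : ℕ) : ℝ) ^ 2 * (2 * Real.exp (-(s ^ 2 / (2 * m)))) := by ring

set_option maxHeartbeats 4000000 in
theorem parity_bias_structured :
    ∃ N : ℕ, ∀ n : ℕ, N ≤ n →
    ∀ (ρ : Fin n → Option Bool)
      (X : Finset (Fin n → Fin (n ^ 256))) (Y : Finset (Fin n → Fin (n ^ 256) → Bool)),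
      X.Nonempty → Y.Nonempty →
      -- all elements of X agree on the fixed positions of ρ
      (∀ x ∈ X, ∀ x' ∈ X, ∀ i : Fin n, ρ i ≠ none → x i = x' i) →
      -- the projection of X to free(ρ) is 0.9-essentially-dense
      (∀ I : Finset (Fin n), (∀ i ∈ I, ρ i = none) → I.Nonempty →
        ∀ α : Fin n → Fin (n ^ 256),
        ((X.filter fun x => ∀ i ∈ I, x i = α i).card : ℝ) ≤
          2 * (X.card : ℝ) * ((n ^ 256 : ℕ) : ℝ) ^ (-(0.9 * (I.card : ℝ)))) →
      -- every output G(x,y) on X × Y is consistent with ρ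
      (∀ x ∈ X, ∀ y ∈ Y, ∀ i : Fin n, ∀ b : Bool, ρ i = some b → y i (x i) = b) →
      -- deficiency of Y at most n³ + 1
      ((n : ℝ) * ((n ^ 256 : ℕ) : ℝ) - Real.logb 2 (Y.card : ℝ) ≤ (n : ℝ) ^ 3 + 1) →
      ∀ I : Finset (Fin n), I.Nonempty → (∀ i ∈ I, ρ i = none) →
        |(∑ p ∈ X ×ˢ Y, (-1 : ℝ) ^ (∑ i ∈ I, if p.2 i (p.1 i) then 1 else 0)) /
            ((X.card : ℝ) * (Y.card : ℝ))| ≤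
          (n : ℝ) ^ (-(5 * (I.card : ℝ))) := by
  use 1000
  intro n hn ρ X Y hX hY hagree hdens hcons hdef I hI hIfree
  classical
  set k : ℕ := I.card with hk_def
  have hn0 : 0 < n := by omega
  have hnR : (1000 : ℝ) ≤ (n : ℝ) := by exact_mod_cast hn
  have hm0 : 0 < n ^ 256 := pow_pos hn0 256
  have hmR : (0:ℝ) < (n ^ 256 : ℕ) := by exact_mod_cast hm0
  have hk1 : 1 ≤ k := hI.card_pos
  have hkn : k ≤ n := by
    calc k ≤ Fintype.card (Fin n) := I.card_le_univ.trans (by simp)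
    _ = n := by simp
  have hXpos : (0:ℝ) < X.card := Nat.cast_pos.2 hX.card_pos
  have hYpos : (0:ℝ) < Y.card := Nat.cast_pos.2 hY.card_pos
  -- abbreviations
  set g : ({j // j ∈ I} → Fin (n ^ 256)) → ℝ :=
    fun β => ∑ y ∈ Y, ∏ i : {j // j ∈ I}, chi (y i.1 (β i)) with hg_def
  set f : (Fin n → Fin (n ^ 256)) → ℝ := fun x => ∑ y ∈ Y, ∏ i ∈ I, chi (y i (x i)) with hf_def
  set π : (Fin n → Fin (n ^ 256)) → ({j // j ∈ I} → Fin (n ^ 256)) := fun x i => x i.1 with hπ_def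
  have hfg : ∀ x : Fin n → Fin (n ^ 256), f x = g (π x) := by
    intro x
    apply Finset.sum_congr rfl
    intro y _
    rw [← Finset.prod_coe_sort I (fun i => chi (y i (x i)))]
  -- the real parameters
  set d : ℝ := (n:ℝ) ^ 3 + 1 with hd_def
  set Lr : ℝ := 2 * d * Real.log 2 + (k:ℝ) * Real.log (n ^ 256 : ℕ) + 1 with hLr_def
  set s : ℝ := Real.sqrt (2 * (n ^ 256 : ℕ) * Lr) with hs_def
  have hlog2 : (0:ℝ) < Real.log 2 := Real.log_pos (by norm_num)
  have hlog2le : Real.log 2 ≤ 1 := by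
    have := Real.log_le_sub_one_of_pos (by norm_num : (0:ℝ) < 2)
    linarith
  have hlogm : (0:ℝ) ≤ Real.log (n ^ 256 : ℕ) := Real.log_nonneg (by exact_mod_cast hm0)
  have hd0 : (0:ℝ) < d := by positivity
  have hLr0 : (0:ℝ) ≤ Lr := by positivity
  have hs0 : (0:ℝ) ≤ s := Real.sqrt_nonneg _
  have hs2 : s ^ 2 = 2 * (n ^ 256 : ℕ) * Lr := Real.sq_sqrt (by positivity)
  have hsE : Real.exp (-(s ^ 2 / (2 * (n ^ 256 : ℕ)))) = Real.exp (-Lr) := by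
    congr 1
    rw [hs2]
    field_simp
  -- the local functions
  set c : {j // j ∈ I} → ((Fin n → Fin (n ^ 256) → Bool) × (Fin n → Fin (n ^ 256) → Bool)) → ℝ :=
    fun i p => ∑ a, chi (p.1 i.1 a) * chi (p.2 i.1 a) with hc_def
  -- Step 0 : rewrite the sum
  have hS0 : (∑ p ∈ X ×ˢ Y, (-1 : ℝ) ^ (∑ i ∈ I, if p.2 i (p.1 i) then 1 else 0)) =
      ∑ x ∈ X, f x := by
    rw [Finset.sum_product]
    apply Finset.sum_congr rfl
    intro x _
    rw [hf_def]
    apply Finset.sum_congr rfl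
    intro y _
    rw [← Finset.prod_pow_eq_pow_sum]
    apply Finset.prod_congr rfl
    intro i _
    cases h : y i (x i) <;> simp [chi, h]
  -- Cauchy–Schwarz
  have hCS : (∑ x ∈ X, f x) ^ 2 ≤ (X.card : ℝ) * ∑ x ∈ X, (f x) ^ 2 := by
    have := sq_sum_le_card_mul_sum_sq (s := X) (f := f)
    exact_mod_cast this
  -- fibering
  have hfiber : ∑ x ∈ X, (f x) ^ 2 =
      ∑ β : {j // j ∈ I} → Fin (n ^ 256),
        ((X.filter fun x => π x = β).card : ℝ) * (g β) ^ 2 := by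
    rw [← Finset.sum_fiberwise X π (fun x => (f x) ^ 2)]
    apply Finset.sum_congr rfl
    intro β _
    have : ∀ x ∈ X.filter fun x => π x = β, (f x) ^ 2 = (g β) ^ 2 := by
      intro x hx
      rw [hfg x, (Finset.mem_filter.1 hx).2]
    rw [Finset.sum_congr rfl this, Finset.sum_const, nsmul_eq_mul]
  have hcardb : ∀ β : {j // j ∈ I} → Fin (n ^ 256),
      ((X.filter fun x => π x = β).card : ℝ) ≤
        2 * (X.card : ℝ) * ((n ^ 256 : ℕ) : ℝ) ^ (-(0.9 * (k : ℝ))) := by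
    intro β
    set α : Fin n → Fin (n ^ 256) := fun j => if h : j ∈ I then β ⟨j, h⟩ else ⟨0, hm0⟩
      with hα_def
    have heq : (X.filter fun x => π x = β) = X.filter fun x => ∀ i ∈ I, x i = α i := by
      apply Finset.filter_congr
      intro x _
      constructor
      · intro h i hi
        have := congrFun h ⟨i, hi⟩
        simp only [hα_def, dif_pos hi]
        exact this
      · intro h
        funext j
        have := h j.1 j.2
        rw [hα_def] at this
        simpa [dif_pos j.2] using this
    rw [heq]
    exact hdens I hIfree hI α
  -- expansion of ∑ g²
  have hT : ∑ β : {j // j ∈ I} → Fin (n ^ 256), (g β) ^ 2 =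
      ∑ p ∈ Y ×ˢ Y, ∏ i : {j // j ∈ I}, c i p := by
    have h1 : ∀ β : {j // j ∈ I} → Fin (n ^ 256), (g β) ^ 2 =
        ∑ p ∈ Y ×ˢ Y, ∏ i : {j // j ∈ I},
          (chi (p.1 i.1 (β i)) * chi (p.2 i.1 (β i))) := by
      intro β
      rw [hg_def, sq, Finset.sum_mul_sum, ← Finset.sum_product']
      apply Finset.sum_congr rfl
      intro p _
      rw [← Finset.prod_mul_distrib]
    simp_rw [h1]
    rw [Finset.sum_comm]
    apply Finset.sum_congr rfl
    intro p _
    rw [hc_def]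
    exact (Fintype.prod_sum (fun (i : {j // j ∈ I}) (a : Fin (n ^ 256)) => chi (p.1 i.1 a) * chi (p.2 i.1 a))).symm
  -- pointwise product bound
  have hpt : ∀ p ∈ (Y ×ˢ Y : Finset (_ × _)),
      ∏ i : {j // j ∈ I}, c i p ≤
        s ^ k + ((n ^ 256 : ℕ) : ℝ) ^ k * ∑ i : {j // j ∈ I}, (if s < |c i p| then (1:ℝ) else 0) := by
    intro p _
    have hcard : Fintype.card {j // j ∈ I} = k := Fintype.card_coe I
    have habs : ∀ i : {j // j ∈ I}, |c i p| ≤ ((n ^ 256 : ℕ) : ℝ) := by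
      intro i
      rw [hc_def]
      calc |∑ a, chi (p.1 i.1 a) * chi (p.2 i.1 a)|
          ≤ ∑ a, |chi (p.1 i.1 a) * chi (p.2 i.1 a)| := Finset.abs_sum_le_sum_abs _ _
        _ = ((n ^ 256 : ℕ) : ℝ) := by
            simp [abs_mul, chi_abs]
    have hprodabs : ∏ i : {j // j ∈ I}, c i p ≤ ∏ i : {j // j ∈ I}, |c i p| := by
      calc ∏ i : {j // j ∈ I}, c i p ≤ |∏ i : {j // j ∈ I}, c i p| := le_abs_self _
        _ = ∏ i : {j // j ∈ I}, |c i p| := Finset.abs_prod _ _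
    by_cases hall : ∀ i : {j // j ∈ I}, |c i p| ≤ s
    · have h1 : ∏ i : {j // j ∈ I}, |c i p| ≤ s ^ k := by
        calc ∏ i : {j // j ∈ I}, |c i p| ≤ ∏ _i : {j // j ∈ I}, s :=
              Finset.prod_le_prod (fun i _ => abs_nonneg _) (fun i _ => hall i)
          _ = s ^ k := by rw [Finset.prod_const, card_univ, hcard]
      have h2 : (0:ℝ) ≤ ((n ^ 256 : ℕ) : ℝ) ^ k *
          ∑ i : {j // j ∈ I}, (if s < |c i p| then (1:ℝ) else 0) := by
        apply mul_nonneg (by positivity)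
        apply Finset.sum_nonneg
        intro i _
        split <;> norm_num
      linarith [hprodabs.trans h1]
    · push_neg at hall
      obtain ⟨i₀, hi₀⟩ := hall
      have h1 : ∏ i : {j // j ∈ I}, |c i p| ≤ ((n ^ 256 : ℕ) : ℝ) ^ k := by
        calc ∏ i : {j // j ∈ I}, |c i p| ≤ ∏ _i : {j // j ∈ I}, ((n ^ 256 : ℕ) : ℝ) :=
              Finset.prod_le_prod (fun i _ => abs_nonneg _) (fun i _ => habs i)
          _ = _ := by rw [Finset.prod_const, card_univ, hcard]
      have h3 : (1:ℝ) ≤ ∑ i : {j // j ∈ I}, (if s < |c i p| then (1:ℝ) else 0) := by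
        have := Finset.single_le_sum (f := fun i : {j // j ∈ I} =>
          (if s < |c i p| then (1:ℝ) else 0)) (fun i _ => by split <;> norm_num)
          (Finset.mem_univ i₀)
        simpa [hi₀] using this
      have h4 : ((n ^ 256 : ℕ) : ℝ) ^ k ≤ ((n ^ 256 : ℕ) : ℝ) ^ k *
          ∑ i : {j // j ∈ I}, (if s < |c i p| then (1:ℝ) else 0) := by
        nth_rewrite 1 [← mul_one (((n ^ 256 : ℕ) : ℝ) ^ k)]
        exact mul_le_mul_of_nonneg_left h3 (by positivity)
      have h5 : (0:ℝ) ≤ s ^ k := pow_nonneg hs0 k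
      linarith [hprodabs.trans h1]
  -- deficiency bound
  have hYlow : (((2 ^ (n ^ 256)) ^ n : ℕ) : ℝ) ≤ (2:ℝ) ^ d * (Y.card : ℝ) := by
    set a : ℝ := Real.logb 2 (Y.card : ℝ) with ha_def
    have h2a : (2:ℝ) ^ a = (Y.card : ℝ) := Real.rpow_logb (by norm_num) (by norm_num) hYpos
    have hcast : (((2 ^ (n ^ 256)) ^ n : ℕ) : ℝ) = (2:ℝ) ^ (((n ^ 256 * n : ℕ) : ℝ)) := by
      rw [Real.rpow_natCast]
      push_cast
      rw [← pow_mul]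
    rw [hcast]
    have hsplit : ((n ^ 256 * n : ℕ) : ℝ) = (((n ^ 256 * n : ℕ) : ℝ) - a) + a := by ring
    rw [hsplit, Real.rpow_add (by norm_num : (0:ℝ) < 2), h2a]
    apply mul_le_mul_of_nonneg_right _ hYpos.le
    apply Real.rpow_le_rpow_of_exponent_le (by norm_num)
    have : ((n ^ 256 * n : ℕ) : ℝ) = (n : ℝ) * ((n ^ 256 : ℕ) : ℝ) := by push_cast; ring
    rw [this, hd_def]
    linarith [hdef]
  have hbad1 : (((2 ^ (n ^ 256)) ^ n : ℕ) : ℝ) ^ 2 * (2 * Real.exp (-Lr)) * ((n ^ 256 : ℕ) : ℝ) ^ k ≤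
      (Y.card : ℝ) ^ 2 := by
    have hstep1 : (((2 ^ (n ^ 256)) ^ n : ℕ) : ℝ) ^ 2 ≤ ((2:ℝ) ^ d * (Y.card : ℝ)) ^ 2 :=
      pow_le_pow_left₀ (by positivity) hYlow 2
    have hbr : ((2:ℝ) ^ d) ^ 2 * (2 * Real.exp (-Lr)) * ((n ^ 256 : ℕ) : ℝ) ^ k ≤ 1 := by
      have e1 : (2:ℝ) ^ d = Real.exp (Real.log 2 * d) := Real.rpow_def_of_pos (by norm_num) d
      have e2 : ((n ^ 256 : ℕ) : ℝ) ^ k = Real.exp ((k:ℝ) * Real.log ((n ^ 256 : ℕ) : ℝ)) := by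
        rw [← Real.log_pow, Real.exp_log (by positivity)]
      rw [e1, e2, ← Real.exp_nat_mul, ← Real.exp_log (by norm_num : (0:ℝ) < 2),
        ← Real.exp_add, ← Real.exp_add, ← Real.exp_add]
      rw [Real.exp_le_one_iff]
      rw [hLr_def]
      push_cast
      ring_nf
      simp only [Real.log_exp]
      linarith [hlog2le]
    calc (((2 ^ (n ^ 256)) ^ n : ℕ) : ℝ) ^ 2 * (2 * Real.exp (-Lr)) * ((n ^ 256 : ℕ) : ℝ) ^ k
        ≤ ((2:ℝ) ^ d * (Y.card : ℝ)) ^ 2 * (2 * Real.exp (-Lr)) * ((n ^ 256 : ℕ) : ℝ) ^ k := by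
          apply mul_le_mul_of_nonneg_right _ (by positivity)
          apply mul_le_mul_of_nonneg_right hstep1 (by positivity)
      _ = (Y.card : ℝ) ^ 2 * (((2:ℝ) ^ d) ^ 2 * (2 * Real.exp (-Lr)) * ((n ^ 256 : ℕ) : ℝ) ^ k) := by
          ring
      _ ≤ (Y.card : ℝ) ^ 2 * 1 := mul_le_mul_of_nonneg_left hbr (by positivity)
      _ = (Y.card : ℝ) ^ 2 := by ring
  -- total bad bound
  have hTbound : ∑ p ∈ Y ×ˢ Y, ∏ i : {j // j ∈ I}, c i p ≤
      (Y.card : ℝ) ^ 2 * (s ^ k + (k : ℝ)) := by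
    have hind_nonneg : ∀ (i : {j // j ∈ I}) p,
        (0:ℝ) ≤ (if s < |c i p| then (1:ℝ) else 0) := by
      intro i p
      split <;> norm_num
    have hbadsum : ∀ i : {j // j ∈ I},
        ∑ p ∈ Y ×ˢ Y, (if s < |c i p| then (1:ℝ) else 0) ≤
          (((2 ^ (n ^ 256)) ^ n : ℕ) : ℝ) ^ 2 * (2 * Real.exp (-Lr)) := by
      intro i
      have hsub : (Y ×ˢ Y) ⊆
          ((univ ×ˢ univ) : Finset (_ × _)) := by
        rw [Finset.univ_product_univ]
        exact Finset.subset_univ _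
      have h1 : ∑ p ∈ Y ×ˢ Y, (if s < |c i p| then (1:ℝ) else 0) ≤
          ∑ p ∈ ((univ ×ˢ univ) : Finset (_ × _)), (if s < |c i p| then (1:ℝ) else 0) :=
        Finset.sum_le_sum_of_subset_of_nonneg hsub (fun p _ _ => hind_nonneg i p)
      have h2 := bad_count (n := n) (m := n ^ 256) hm0 i.1 hs0
      rw [hsE] at h2
      exact h1.trans h2
    calc ∑ p ∈ Y ×ˢ Y, ∏ i : {j // j ∈ I}, c i p
        ≤ ∑ p ∈ Y ×ˢ Y, (s ^ k + ((n ^ 256 : ℕ) : ℝ) ^ k *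
            ∑ i : {j // j ∈ I}, (if s < |c i p| then (1:ℝ) else 0)) :=
          Finset.sum_le_sum hpt
      _ = (Y.card : ℝ) ^ 2 * s ^ k + ((n ^ 256 : ℕ) : ℝ) ^ k *
            ∑ i : {j // j ∈ I}, ∑ p ∈ Y ×ˢ Y, (if s < |c i p| then (1:ℝ) else 0) := by
          rw [Finset.sum_add_distrib, Finset.sum_const, Finset.card_product, nsmul_eq_mul,
            ← Finset.mul_sum, Finset.sum_comm]
          push_cast
          ring
      _ ≤ (Y.card : ℝ) ^ 2 * s ^ k + ((n ^ 256 : ℕ) : ℝ) ^ k *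
            ∑ _i : {j // j ∈ I}, (((2 ^ (n ^ 256)) ^ n : ℕ) : ℝ) ^ 2 * (2 * Real.exp (-Lr)) := by
          apply add_le_add (le_refl _)
          apply mul_le_mul_of_nonneg_left _ (by positivity)
          exact Finset.sum_le_sum fun i _ => hbadsum i
      _ = (Y.card : ℝ) ^ 2 * s ^ k + (k : ℝ) *
            ((((2 ^ (n ^ 256)) ^ n : ℕ) : ℝ) ^ 2 * (2 * Real.exp (-Lr)) *
              ((n ^ 256 : ℕ) : ℝ) ^ k) := by
          rw [Finset.sum_const, card_univ, Fintype.card_coe, nsmul_eq_mul]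
          ring
      _ ≤ (Y.card : ℝ) ^ 2 * s ^ k + (k : ℝ) * (Y.card : ℝ) ^ 2 := by
          apply add_le_add (le_refl _)
          exact mul_le_mul_of_nonneg_left hbad1 (Nat.cast_nonneg k)
      _ = (Y.card : ℝ) ^ 2 * (s ^ k + (k : ℝ)) := by ring
  -- s is small
  have hsk : s ≤ (n:ℝ) ^ 130 := by
    have hmcast : ((n ^ 256 : ℕ) : ℝ) = (n:ℝ) ^ 256 := by push_cast; ring
    have hlogn : Real.log (n:ℝ) ≤ (n:ℝ) := by
      have := Real.log_le_sub_one_of_pos (by positivity : (0:ℝ) < (n:ℝ))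
      linarith
    have hlogm : Real.log ((n ^ 256 : ℕ) : ℝ) ≤ 256 * (n:ℝ) := by
      rw [hmcast, Real.log_pow]
      push_cast
      linarith [hlogn]
    have hkR : (k:ℝ) ≤ (n:ℝ) := by exact_mod_cast hkn
    have hlogm0 : (0:ℝ) ≤ Real.log ((n ^ 256 : ℕ) : ℝ) := Real.log_nonneg (by exact_mod_cast hm0)
    have hL3 : Lr ≤ 3 * (n:ℝ) ^ 3 := by
      rw [hLr_def, hd_def]
      have h1 : 2 * ((n:ℝ) ^ 3 + 1) * Real.log 2 ≤ 2 * ((n:ℝ) ^ 3 + 1) := by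
        have h0 : (0:ℝ) ≤ 2 * ((n:ℝ) ^ 3 + 1) := by positivity
        have := mul_le_mul_of_nonneg_left hlog2le h0
        linarith
      have h2 : (k:ℝ) * Real.log ((n ^ 256 : ℕ) : ℝ) ≤ (n:ℝ) * (256 * (n:ℝ)) := by
        apply mul_le_mul hkR hlogm hlogm0 (by positivity)
      have hn1' : (1:ℝ) ≤ (n:ℝ) := by linarith
      have hc1 : (n:ℝ) ^ 3 ≥ 1000 * (n:ℝ) ^ 2 := by
        have h := mul_le_mul_of_nonneg_right hnR (sq_nonneg (n:ℝ))
        have h' : (n:ℝ) * (n:ℝ) ^ 2 = (n:ℝ) ^ 3 := by ring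
        linarith
      have hc2 : (n:ℝ) ^ 2 ≥ 2 * (n:ℝ) - 1 := by
        have h := sq_nonneg ((n:ℝ) - 1)
        have h' : ((n:ℝ) - 1) ^ 2 = (n:ℝ) ^ 2 - 2 * (n:ℝ) + 1 := by ring
        linarith
      linarith
    have hb : 2 * ((n ^ 256 : ℕ) : ℝ) * Lr ≤ ((n:ℝ) ^ 130) ^ 2 := by
      rw [hmcast]
      have h1 : 2 * (n:ℝ) ^ 256 * Lr ≤ 2 * (n:ℝ) ^ 256 * (3 * (n:ℝ) ^ 3) := by
        apply mul_le_mul_of_nonneg_left hL3 (by positivity)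
      have h2 : 2 * (n:ℝ) ^ 256 * (3 * (n:ℝ) ^ 3) = 6 * (n:ℝ) ^ 259 := by ring
      have h3 : ((n:ℝ) ^ 130) ^ 2 = (n:ℝ) ^ 259 * (n:ℝ) := by ring
      have h4 : 6 * (n:ℝ) ^ 259 ≤ (n:ℝ) ^ 259 * (n:ℝ) := by
        rw [mul_comm (6:ℝ)]
        apply mul_le_mul_of_nonneg_left (by linarith) (by positivity)
      linarith
    rw [hs_def]
    calc Real.sqrt (2 * ((n ^ 256 : ℕ) : ℝ) * Lr) ≤ Real.sqrt (((n:ℝ) ^ 130) ^ 2) :=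
        Real.sqrt_le_sqrt hb
      _ = (n:ℝ) ^ 130 := Real.sqrt_sq (by positivity)
  -- the numeric end-game
  have hnum : 2 * ((n ^ 256 : ℕ) : ℝ) ^ (-(0.9 * (k : ℝ))) * (s ^ k + (k:ℝ)) ≤
      (n:ℝ) ^ (-(10 * (k : ℝ))) := by
    have hn1 : (1:ℝ) ≤ (n:ℝ) := by linarith
    have hsk' : s ^ k ≤ (n:ℝ) ^ (130 * k) := by
      rw [pow_mul]
      exact pow_le_pow_left₀ hs0 hsk k
    have hkk : (k:ℝ) ≤ (n:ℝ) ^ (130 * k) := by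
      have h1 : (k:ℝ) ≤ (n:ℝ) := by exact_mod_cast hkn
      have h2 : (n:ℝ) ≤ (n:ℝ) ^ (130 * k) := by
        nth_rewrite 1 [← pow_one (n:ℝ)]
        apply pow_le_pow_right₀ hn1
        omega
      linarith
    have hA : s ^ k + (k:ℝ) ≤ 2 * (n:ℝ) ^ (130 * k) := by linarith
    have hA0 : (0:ℝ) ≤ s ^ k + (k:ℝ) := by positivity
    -- rewrite rpow expressions
    have hmpow : ((n ^ 256 : ℕ) : ℝ) ^ (-(0.9 * (k : ℝ))) =
        (((n ^ 256 : ℕ) : ℝ) ^ ((0.9 * (k : ℝ)) : ℝ))⁻¹ := by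
      rw [← Real.rpow_neg hmR.le]
    have hnpow : (n:ℝ) ^ (-(10 * (k : ℝ))) = ((n:ℝ) ^ ((10 * (k : ℝ)) : ℝ))⁻¹ := by
      rw [← Real.rpow_neg (by positivity)]
    have hP0 : (0:ℝ) < ((n ^ 256 : ℕ) : ℝ) ^ ((0.9 * (k : ℝ)) : ℝ) :=
      Real.rpow_pos_of_pos hmR _
    have hQ0 : (0:ℝ) < (n:ℝ) ^ ((10 * (k : ℝ)) : ℝ) :=
      Real.rpow_pos_of_pos (by positivity) _
    have hQeq : (n:ℝ) ^ ((10 * (k : ℝ)) : ℝ) = (n:ℝ) ^ (10 * k) := by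
      rw [← Real.rpow_natCast (n:ℝ) (10 * k)]
      congr 1
      push_cast
      ring
    have hmain : 4 * (n:ℝ) ^ (130 * k) * (n:ℝ) ^ ((10 * (k : ℝ)) : ℝ) ≤
        ((n ^ 256 : ℕ) : ℝ) ^ ((0.9 * (k : ℝ)) : ℝ) := by
      rw [hQeq]
      have h1 : 4 * (n:ℝ) ^ (130 * k) * (n:ℝ) ^ (10 * k) ≤ (n:ℝ) ^ (140 * k + 1) := by
        have : (n:ℝ) ^ (130 * k) * (n:ℝ) ^ (10 * k) = (n:ℝ) ^ (140 * k) := by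
          rw [← pow_add]
          congr 1
          omega
        calc 4 * (n:ℝ) ^ (130 * k) * (n:ℝ) ^ (10 * k) = 4 * (n:ℝ) ^ (140 * k) := by
              rw [mul_assoc, this]
          _ ≤ (n:ℝ) * (n:ℝ) ^ (140 * k) := by
              apply mul_le_mul_of_nonneg_right (by linarith) (by positivity)
          _ = (n:ℝ) ^ (140 * k + 1) := by rw [pow_succ]; ring
      have h2 : (n:ℝ) ^ (140 * k + 1) ≤ (n:ℝ) ^ (230 * k) :=
        pow_le_pow_right₀ hn1 (by omega)
      have h3 : (n:ℝ) ^ (230 * k) ≤ ((n ^ 256 : ℕ) : ℝ) ^ ((0.9 * (k : ℝ)) : ℝ) := by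
        have hmcast : ((n ^ 256 : ℕ) : ℝ) = (n:ℝ) ^ 256 := by push_cast; ring
        rw [hmcast, ← Real.rpow_natCast (n:ℝ) 256, ← Real.rpow_mul (by positivity),
          ← Real.rpow_natCast (n:ℝ) (230 * k)]
        apply Real.rpow_le_rpow_of_exponent_le hn1
        push_cast
        linarith [Nat.cast_nonneg (α := ℝ) k]
      linarith
    rw [hmpow, hnpow]
    have hLHS : 2 * ((((n ^ 256 : ℕ) : ℝ) ^ ((0.9 * (k : ℝ)) : ℝ))⁻¹) * (s ^ k + (k:ℝ)) =
        (2 * (s ^ k + (k:ℝ))) / (((n ^ 256 : ℕ) : ℝ) ^ ((0.9 * (k : ℝ)) : ℝ)) := by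
      ring
    have hRHS : (((n:ℝ) ^ ((10 * (k : ℝ)) : ℝ))⁻¹ : ℝ) =
        1 / ((n:ℝ) ^ ((10 * (k : ℝ)) : ℝ)) := by
      rw [one_div]
    rw [hLHS, hRHS, div_le_div_iff₀ hP0 hQ0, one_mul]
    calc 2 * (s ^ k + (k:ℝ)) * (n:ℝ) ^ ((10 * (k : ℝ)) : ℝ)
        ≤ 2 * (2 * (n:ℝ) ^ (130 * k)) * (n:ℝ) ^ ((10 * (k : ℝ)) : ℝ) := by
          apply mul_le_mul_of_nonneg_right _ hQ0.le
          linarith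
      _ = 4 * (n:ℝ) ^ (130 * k) * (n:ℝ) ^ ((10 * (k : ℝ)) : ℝ) := by ring
      _ ≤ ((n ^ 256 : ℕ) : ℝ) ^ ((0.9 * (k : ℝ)) : ℝ) := hmain
  -- assemble
  have hsum2 : ∑ x ∈ X, (f x) ^ 2 ≤
      (X.card : ℝ) * ((Y.card : ℝ) ^ 2 * (n:ℝ) ^ (-(10 * (k : ℝ)))) := by
    calc ∑ x ∈ X, (f x) ^ 2
        = ∑ β : {j // j ∈ I} → Fin (n ^ 256),
            ((X.filter fun x => π x = β).card : ℝ) * (g β) ^ 2 := hfiber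
      _ ≤ ∑ β : {j // j ∈ I} → Fin (n ^ 256),
            (2 * (X.card : ℝ) * ((n ^ 256 : ℕ) : ℝ) ^ (-(0.9 * (k : ℝ)))) * (g β) ^ 2 :=
          Finset.sum_le_sum fun β _ =>
            mul_le_mul_of_nonneg_right (hcardb β) (sq_nonneg _)
      _ = (2 * (X.card : ℝ) * ((n ^ 256 : ℕ) : ℝ) ^ (-(0.9 * (k : ℝ)))) *
            ∑ β : {j // j ∈ I} → Fin (n ^ 256), (g β) ^ 2 := by
          rw [Finset.mul_sum]
      _ ≤ (2 * (X.card : ℝ) * ((n ^ 256 : ℕ) : ℝ) ^ (-(0.9 * (k : ℝ)))) *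
            ((Y.card : ℝ) ^ 2 * (s ^ k + (k : ℝ))) := by
          apply mul_le_mul_of_nonneg_left _ (by positivity)
          rw [hT]
          exact hTbound
      _ = (X.card : ℝ) * ((Y.card : ℝ) ^ 2 *
            (2 * ((n ^ 256 : ℕ) : ℝ) ^ (-(0.9 * (k : ℝ))) * (s ^ k + (k : ℝ)))) := by ring
      _ ≤ (X.card : ℝ) * ((Y.card : ℝ) ^ 2 * (n:ℝ) ^ (-(10 * (k : ℝ)))) := by
          apply mul_le_mul_of_nonneg_left _ hXpos.le
          exact mul_le_mul_of_nonneg_left hnum (by positivity)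
  have hS2 : (∑ x ∈ X, f x) ^ 2 ≤
      (X.card : ℝ) ^ 2 * (Y.card : ℝ) ^ 2 * (n:ℝ) ^ (-(10 * (k : ℝ))) := by
    calc (∑ x ∈ X, f x) ^ 2 ≤ (X.card : ℝ) * ∑ x ∈ X, (f x) ^ 2 := hCS
      _ ≤ (X.card : ℝ) * ((X.card : ℝ) * ((Y.card : ℝ) ^ 2 * (n:ℝ) ^ (-(10 * (k : ℝ))))) :=
          mul_le_mul_of_nonneg_left hsum2 hXpos.le
      _ = (X.card : ℝ) ^ 2 * (Y.card : ℝ) ^ 2 * (n:ℝ) ^ (-(10 * (k : ℝ))) := by ring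
  rw [hS0]
  have hden : (0:ℝ) < (X.card : ℝ) * (Y.card : ℝ) := mul_pos hXpos hYpos
  rw [abs_div, abs_of_pos hden, div_le_iff₀ hden]
  have hR0 : (0:ℝ) ≤ (n:ℝ) ^ (-(5 * (k : ℝ))) * ((X.card : ℝ) * (Y.card : ℝ)) := by
    have := Real.rpow_pos_of_pos (show (0:ℝ) < (n:ℝ) by positivity) (-(5 * (k : ℝ)))
    positivity
  have hsq : |∑ x ∈ X, f x| ^ 2 ≤
      ((n:ℝ) ^ (-(5 * (k : ℝ))) * ((X.card : ℝ) * (Y.card : ℝ))) ^ 2 := by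
    rw [sq_abs]
    have hexp : ((n:ℝ) ^ (-(5 * (k : ℝ)))) ^ 2 = (n:ℝ) ^ (-(10 * (k : ℝ))) := by
      rw [sq, ← Real.rpow_add (by positivity : (0:ℝ) < (n:ℝ))]
      congr 1
      ring
    calc (∑ x ∈ X, f x) ^ 2 ≤ (X.card : ℝ) ^ 2 * (Y.card : ℝ) ^ 2 * (n:ℝ) ^ (-(10 * (k : ℝ))) :=
          hS2
      _ = ((n:ℝ) ^ (-(5 * (k : ℝ))) * ((X.card : ℝ) * (Y.card : ℝ))) ^ 2 := by
          rw [mul_pow, hexp]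
          ring
  calc |∑ x ∈ X, f x| = Real.sqrt (|∑ x ∈ X, f x| ^ 2) :=
        (Real.sqrt_sq (abs_nonneg _)).symm
    _ ≤ Real.sqrt (((n:ℝ) ^ (-(5 * (k : ℝ))) * ((X.card : ℝ) * (Y.card : ℝ))) ^ 2) :=
        Real.sqrt_le_sqrt hsq
    _ = (n:ℝ) ^ (-(5 * (k : ℝ))) * ((X.card : ℝ) * (Y.card : ℝ)) := Real.sqrt_sq hR0
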